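/- Let G be a finite abelian group, F an algebraically closed field of characteristic zero, and M an n×n matrix with entries in the group algebra F[G]. Let Λ be the matrix (with respect to any F-basis) of the F-linear endomorphism of F[G]ⁿ given by multiplication by M. Then det(I − u·Λ) = ∏_{ψ} det(I − u·ψ(M)) in F[u], where the product runs over all characters ψ : G → Fˣ and ψ(M) is the n×n matrix over F obtained by applying to each entry the F-algebra homomorphism F[G] → F induced by ψ. (This is the identity underlying the paper's Theorem 'product_dec': g_Y(u) = g_X(u)·∏_{ψ≠ψ₀} g_{Y/X}(u,ψ) for an abelian Galois cover Y/X of finite digraphs.) -/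

import Mathlib

open Polynomial

private lemma aux_det_conj {R : Type*} [CommRing R] {m k : Type*} [Fintype m] [Fintype k]
    [DecidableEq m] [DecidableEq k] (P : Matrix m k R) (Q : Matrix k m R)
    (hPQ : P * Q = 1) (hQP : Q * P = 1) (B : Matrix k k R) :
    ((1 : Matrix m m R[X]) - (X : R[X]) • (P * B * Q).map C).det =
      ((1 : Matrix k k R[X]) - (X : R[X]) • B.map C).det := by
  have h1 : (P.map (C : R →+* R[X])) * (Q.map C) = 1 := by
    rw [← Matrix.map_mul, hPQ, Matrix.map_one _ (map_zero C) (map_one C)]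
  have h2 : (Q.map (C : R →+* R[X])) * (P.map C) = 1 := by
    rw [← Matrix.map_mul, hQP, Matrix.map_one _ (map_zero C) (map_one C)]
  have key : (1 : Matrix m m R[X]) - (X : R[X]) • (P * B * Q).map C
      = P.map C * ((1 : Matrix k k R[X]) - (X : R[X]) • B.map C) * Q.map C := by
    rw [Matrix.mul_sub, Matrix.sub_mul, Matrix.mul_one, h1, Matrix.mul_smul, Matrix.smul_mul,
      Matrix.map_mul, Matrix.map_mul]
  rw [key, Matrix.det_conj_of_mul_eq_one h1 h2]

theorem stmt8 {G : Type*} [CommGroup G] [Fintype G]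
    (F : Type*) [Field F] [IsAlgClosed F] [CharZero F]
    [Fintype (G →* Fˣ)]
    {n : ℕ} (M : Matrix (Fin n) (Fin n) (MonoidAlgebra F G))
    {ι : Type*} [Fintype ι] [DecidableEq ι]
    (b : Module.Basis ι F (Fin n → MonoidAlgebra F G))
    (Λ : Matrix ι ι F)
    (hΛ : Λ = LinearMap.toMatrix b b ((Matrix.mulVecLin M).restrictScalars F)) :
    Matrix.det ((1 : Matrix ι ι (Polynomial F)) - (X : Polynomial F) • Λ.map C) =
      ∏ ψ : G →* Fˣ,
        Matrix.det ((1 : Matrix (Fin n) (Fin n) (Polynomial F)) -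
          (X : Polynomial F) •
            (M.map ⇑((MonoidAlgebra.lift F F G) ((Units.coeHom F).comp ψ))).map C) := by
  classical
  haveI : NeZero ((Monoid.exponent G : F)) :=
    ⟨by exact_mod_cast (Nat.cast_ne_zero (R := F)).mpr Monoid.exponent_ne_zero_of_finite⟩
  set L : (G →* Fˣ) → (MonoidAlgebra F G →ₐ[F] F) :=
    fun ψ => MonoidAlgebra.lift F F G ((Units.coeHom F).comp ψ) with hL
  set Φ : MonoidAlgebra F G →ₐ[F] ((G →* Fˣ) → F) := Pi.algHom F _ L with hΦ
  -- evaluation characters of the dual group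
  let ev : G → ((G →* Fˣ) →* F) := fun σ =>
    { toFun := fun ψ => (ψ σ : F)
      map_one' := by simp
      map_mul' := fun ψ φ => by simp }
  have hev : Function.Injective ev := by
    intro σ τ h
    by_contra hne
    have h1 : σ * τ⁻¹ ≠ 1 := by
      simpa [mul_inv_eq_one] using hne
    obtain ⟨ψ, hψ⟩ := CommGroup.exists_apply_ne_one_of_hasEnoughRootsOfUnity G F h1
    apply hψ
    have h2 : (ψ σ : F) = (ψ τ : F) := by
      have := congrArg (fun (f : (G →* Fˣ) →* F) => f ψ) h
      simpa [ev] using this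
    have h3 : ψ σ = ψ τ := Units.ext h2
    rw [map_mul, map_inv, h3, mul_inv_cancel]
  have hli : LinearIndependent F (fun σ : G => ((ev σ : ((G →* Fˣ) →* F)) : (G →* Fˣ) → F)) :=
    (linearIndependent_monoidHom (G →* Fˣ) F).comp ev hev
  -- injectivity of Φ
  have hΦinj : Function.Injective Φ := by
    rw [injective_iff_map_eq_zero]
    intro x hx
    have hx' : ∑ σ : G, x.coeff σ • ((ev σ : ((G →* Fˣ) →* F)) : (G →* Fˣ) → F) = 0 := by
      funext ψ
      have h0 := congrFun hx ψ
      have h1 : Φ x ψ = L ψ x := rfl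
      rw [h1, hL] at h0
      simp only [MonoidAlgebra.lift_apply] at h0
      rw [Finsupp.sum_fintype _ _ (by intro _; simp)] at h0
      simpa [ev, Finset.sum_apply] using h0
    have h0 := Fintype.linearIndependent_iff.mp hli (fun σ => x.coeff σ) hx'
    apply MonoidAlgebra.coeff_injective
    ext σ
    exact h0 σ
  -- surjectivity via dimension count
  let e1 : MonoidAlgebra F G ≃ₗ[F] (G → F) :=
    (MonoidAlgebra.coeffLinearEquiv F).trans (Finsupp.linearEquivFunOnFinite F F G)
  haveI : Module.Finite F (MonoidAlgebra F G) := Module.Finite.equiv e1.symm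
  obtain ⟨edual⟩ := CommGroup.monoidHom_mulEquiv_of_hasEnoughRootsOfUnity G F
  have hcard : Fintype.card (G →* Fˣ) = Fintype.card G := Fintype.card_congr edual.toEquiv
  have hrank : Module.finrank F (MonoidAlgebra F G) = Module.finrank F ((G →* Fˣ) → F) := by
    rw [e1.finrank_eq, Module.finrank_fintype_fun_eq_card, Module.finrank_fintype_fun_eq_card,
      hcard]
  have hΦsurj : Function.Surjective Φ := by
    have h := (LinearMap.injective_iff_surjective_of_finrank_eq_finrank
      (f := Φ.toLinearMap) hrank).mp hΦinj
    exact h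
  let E : MonoidAlgebra F G ≃ₐ[F] ((G →* Fˣ) → F) := AlgEquiv.ofBijective Φ ⟨hΦinj, hΦsurj⟩
  -- the diagonalizing basis
  let ε : (Fin n → MonoidAlgebra F G) ≃ₗ[F] (Fin n × (G →* Fˣ) → F) :=
    (LinearEquiv.piCongrRight fun _ : Fin n => E.toLinearEquiv).trans
      (LinearEquiv.curry F F (Fin n) (G →* Fˣ)).symm
  have hεapply : ∀ (x : Fin n → MonoidAlgebra F G) (i : Fin n) (ψ : G →* Fˣ),
      ε x (i, ψ) = L ψ (x i) := fun x i ψ => rfl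
  let c : Module.Basis (Fin n × (G →* Fˣ)) F (Fin n → MonoidAlgebra F G) :=
    (Pi.basisFun F (Fin n × (G →* Fˣ))).map ε.symm
  set f : (Fin n → MonoidAlgebra F G) →ₗ[F] (Fin n → MonoidAlgebra F G) :=
    (Matrix.mulVecLin M).restrictScalars F with hf
  -- the matrix of f in basis c is block diagonal
  have hA : LinearMap.toMatrix c c f
      = Matrix.blockDiagonal (fun ψ => M.map ⇑(L ψ)) := by
    ext ⟨i, ψ⟩ ⟨j, ψ'⟩
    have hw : ε.symm (Pi.single (j, ψ') 1)
        = Pi.single j (E.symm (Pi.single ψ' (1 : F))) := by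
      rw [LinearEquiv.symm_apply_eq]
      funext p
      obtain ⟨i, ψ⟩ := p
      rw [hεapply]
      rcases eq_or_ne i j with rfl | hij
      · have : L ψ (E.symm (Pi.single ψ' (1 : F))) = E (E.symm (Pi.single ψ' (1:F))) ψ := rfl
        simp only [Pi.single_eq_same, this, AlgEquiv.apply_symm_apply]
        simp [Pi.single_apply, Prod.ext_iff]
      · simp [Pi.single_eq_of_ne hij, Pi.single_apply, Prod.ext_iff, hij]
    rw [LinearMap.toMatrix_apply]
    have hc1 : c (j, ψ') = ε.symm (Pi.single (j, ψ') 1) := by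
      simp [c, Module.Basis.map_apply]
    have hc2 : ∀ y, c.repr y (i, ψ) = ε y (i, ψ) := by
      intro y
      simp [c, Module.Basis.map_repr]
    rw [hc1, hc2, hw]
    have hfv : f (Pi.single j (E.symm (Pi.single ψ' (1 : F))))
        = fun i => M i j * E.symm (Pi.single ψ' (1 : F)) := by
      rw [hf]
      simp [Matrix.mulVecLin_apply, Matrix.mulVec_single]
      funext k
      simp [Pi.smul_apply, smul_eq_mul, Matrix.col_apply, mul_comm]
    rw [hfv, hεapply, map_mul]
    have : L ψ (E.symm (Pi.single ψ' (1 : F))) = E (E.symm (Pi.single ψ' (1:F))) ψ := rfl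
    rw [this, AlgEquiv.apply_symm_apply]
    rw [Matrix.blockDiagonal_apply]
    rcases eq_or_ne ψ ψ' with rfl | hψ
    · simp [Matrix.map_apply]
    · simp [Pi.single_apply, hψ, Ne.symm hψ]
  -- change of basis and conclusion
  have hconj : Λ = b.toMatrix ⇑c * LinearMap.toMatrix c c f * c.toMatrix ⇑b := by
    rw [hΛ, basis_toMatrix_mul_linearMap_toMatrix_mul_basis_toMatrix]
  rw [hconj, aux_det_conj _ _ (Module.Basis.toMatrix_mul_toMatrix_flip b c)
    (Module.Basis.toMatrix_mul_toMatrix_flip c b), hA,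
    Matrix.blockDiagonal_map _ _ (map_zero C)]
  rw [show ((X : F[X]) • Matrix.blockDiagonal fun ψ => (M.map ⇑(L ψ)).map C)
      = Matrix.blockDiagonal fun ψ => (X : F[X]) • (M.map ⇑(L ψ)).map C from
    (Matrix.blockDiagonal_smul _ _).symm]
  rw [← Matrix.blockDiagonal_one, ← Matrix.blockDiagonal_sub, Matrix.det_blockDiagonal]
  exact Finset.prod_congr rfl fun ψ _ => by simp [hL]
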